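/- Let α ∈ [0,1] be a real number, let G be a simple graph with vertex set {v_1, …, v_n} (n ≥ 3), and let H = G[K_{p_1}, …, K_{p_n}] be the joined union in which the complete graph K_{p_i} (p_i ≥ 1) is placed on the vertex v_i. Put α_i = Σ_{j : v_j ∈ N_G(v_i)} p_j. Then for every i with p_i ≥ 2, the number α·p_i − 1 + α·α_i is an eigenvalue of A_α(H) whose eigenspace has dimension at least p_i − 1. -/

import Mathlib

open Matrix Polynomial BigOperators

/-- The generalized adjacency matrix `A_α(G) = α·D(G) + (1−α)·A(G)`. -/
noncomputable def Aalpha {V : Type*} [Fintype V] (G : SimpleGraph V) (α : ℝ) :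
    Matrix V V ℝ :=
  letI := Classical.decEq V
  letI := Classical.decRel G.Adj
  α • Matrix.diagonal (fun v => (G.degree v : ℝ)) + (1 - α) • G.adjMatrix ℝ

/-- `μ` is an eigenvalue of the real matrix `M`. -/
def Matrix.IsEigenvalue {n : Type*} [Fintype n] (M : Matrix n n ℝ) (μ : ℝ) : Prop :=
  ∃ v : n → ℝ, v ≠ 0 ∧ M.mulVec v = μ • v

/-- The dimension of the eigenspace of a real matrix `M` for the value `μ`. -/
noncomputable def eigMult {n : Type*} [Fintype n] (M : Matrix n n ℝ) (μ : ℝ) : ℕ :=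
  letI := Classical.decEq n
  Module.finrank ℝ (Module.End.eigenspace (Matrix.toLin' M) μ)

/-- The joined union `G[G_1, …, G_n]`. -/
def joinedUnion {n : ℕ} (G : SimpleGraph (Fin n)) (V : Fin n → Type*)
    (Gs : ∀ i, SimpleGraph (V i)) : SimpleGraph (Σ i, V i) :=
  SimpleGraph.fromRel (fun x y =>
    if h : x.1 = y.1 then (Gs y.1).Adj (h ▸ x.2) y.2 else G.Adj x.1 y.1)

/-- The join `G ∇ H` of two graphs. -/
def graphJoin {V W : Type*} (G : SimpleGraph V) (H : SimpleGraph W) :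
    SimpleGraph (V ⊕ W) :=
  SimpleGraph.fromRel (fun x y =>
    match x, y with
    | Sum.inl a, Sum.inl b => G.Adj a b
    | Sum.inr a, Sum.inr b => H.Adj a b
    | _, _ => True)

/-- The disjoint union `G ∪ H` of two graphs. -/
def disjUnion {V W : Type*} (G : SimpleGraph V) (H : SimpleGraph W) :
    SimpleGraph (V ⊕ W) :=
  SimpleGraph.fromRel (fun x y =>
    match x, y with
    | Sum.inl a, Sum.inl b => G.Adj a b
    | Sum.inr a, Sum.inr b => H.Adj a b
    | _, _ => False)

/-- Degree of a vertex (classical version). -/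
noncomputable def gdegree {V : Type*} [Fintype V] (G : SimpleGraph V) (v : V) : ℕ :=
  letI := Classical.decEq V
  letI := Classical.decRel G.Adj
  G.degree v

/-- The power graph of a group. -/
def powerGraph (G : Type*) [Group G] : SimpleGraph G :=
  SimpleGraph.fromRel (fun x y => ∃ k : ℕ, 0 < k ∧ y = x ^ k)

lemma adj_same' {n : ℕ} (G : SimpleGraph (Fin n)) (p : Fin n → ℕ)
    (j : Fin n) (b c : Fin (p j)) :
    (joinedUnion G (fun k => Fin (p k)) (fun _ => ⊤)).Adj ⟨j,b⟩ ⟨j,c⟩ ↔ b ≠ c := by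
  simp [joinedUnion, SimpleGraph.fromRel_adj]
  tauto

lemma adj_ne' {n : ℕ} (G : SimpleGraph (Fin n)) (p : Fin n → ℕ)
    {j k : Fin n} (hjk : j ≠ k) (b : Fin (p j)) (c : Fin (p k)) :
    (joinedUnion G (fun l => Fin (p l)) (fun _ => ⊤)).Adj ⟨j,b⟩ ⟨k,c⟩ ↔ G.Adj j k := by
  simp [joinedUnion, SimpleGraph.fromRel_adj, hjk, hjk.symm]
  exact fun h => h.symm

lemma deg_eq' {n : ℕ} (G : SimpleGraph (Fin n)) [DecidableRel G.Adj] (p : Fin n → ℕ)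
    (i : Fin n) (a : Fin (p i))
    (inst : Fintype ((joinedUnion G (fun k => Fin (p k)) (fun _ => ⊤)).neighborSet ⟨i,a⟩)) :
    @SimpleGraph.degree _ (joinedUnion G (fun k => Fin (p k)) (fun _ => ⊤)) ⟨i,a⟩ inst
      = (p i - 1) + ∑ j ∈ G.neighborFinset i, p j := by
  classical
  set H := joinedUnion G (fun k => Fin (p k)) (fun _ => ⊤) with hH
  letI dec : DecidableRel H.Adj := Classical.decRel _
  have hinst : inst = H.neighborSetFintype ⟨i,a⟩ := Subsingleton.elim _ _
  subst hinst
  rw [← SimpleGraph.card_neighborSet_eq_degree]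
  have h1 : Fintype.card (H.neighborSet ⟨i,a⟩) =
      (Finset.univ.filter (fun y => H.Adj ⟨i,a⟩ y)).card := by
    rw [← Set.toFinset_card]
    congr 1
    ext y
    simp [SimpleGraph.neighborSet]
    unfold Set.toFinset
    rw [Finset.mem_map]
    exact ⟨fun ⟨x, _, hx⟩ => by subst hx; exact x.2, fun h => ⟨⟨y, h⟩, @Finset.mem_univ _ inst ⟨y, h⟩, rfl⟩⟩
  rw [h1, Finset.card_filter]
  rw [← Finset.univ_sigma_univ, Finset.sum_sigma]
  rw [Finset.sum_eq_add_sum_sdiff_singleton_of_mem (Finset.mem_univ i)]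
  congr 1
  · have h2 : ∀ s : Fin (p i), (if H.Adj ⟨i,a⟩ ⟨i,s⟩ then (1:ℕ) else 0)
        = if s ∈ Finset.univ.erase a then 1 else 0 := by
      intro s
      simp [hH, adj_same', ne_comm]
    rw [Finset.sum_congr rfl (fun s _ => h2 s), ← Finset.card_filter,
      Finset.filter_mem_eq_inter, Finset.univ_inter, Finset.card_erase_of_mem (Finset.mem_univ a),
      Finset.card_univ, Fintype.card_fin]
  · have h3 : ∀ j ∈ Finset.univ \ {i}, (∑ s : Fin (p j), if H.Adj ⟨i,a⟩ ⟨j,s⟩ then (1:ℕ) else 0)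
        = if G.Adj i j then p j else 0 := by
      intro j hj
      have hij : i ≠ j := by
        simp only [Finset.mem_sdiff, Finset.mem_singleton] at hj
        exact fun h => hj.2 h.symm
      by_cases hadj : G.Adj i j
      · simp [hH, adj_ne' G p hij, hadj]
      · simp [hH, adj_ne' G p hij, hadj]
    rw [Finset.sum_congr rfl h3]
    rw [SimpleGraph.neighborFinset_eq_filter, Finset.sum_filter]
    apply Finset.sum_subset (Finset.sdiff_subset)
    intro j _ hj
    have : j = i := by
      by_contra hne
      exact hj (Finset.mem_sdiff.2 ⟨Finset.mem_univ _, by simpa using hne⟩)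
    subst this
    simp


/-- eigenvalues of a joined union of complete graphs. -/
theorem stmt_2 {α : ℝ} (hα : α ∈ Set.Icc (0 : ℝ) 1)
    {n : ℕ} (hn : 3 ≤ n) (G : SimpleGraph (Fin n)) [DecidableRel G.Adj]
    (p : Fin n → ℕ) (hp : ∀ i, 1 ≤ p i) (i : Fin n) (hpi : 2 ≤ p i) :
    p i - 1 ≤
      eigMult (Aalpha (joinedUnion G (fun j => Fin (p j)) (fun _ => ⊤)) α)
        (α * (p i : ℝ) - 1 + α * ∑ j ∈ G.neighborFinset i, (p j : ℝ)) := by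
  set H := joinedUnion G (fun j => Fin (p j)) (fun _ => ⊤) with hH
  set M := Aalpha H α with hM
  set μ : ℝ := α * (p i : ℝ) - 1 + α * ∑ j ∈ G.neighborFinset i, (p j : ℝ) with hμ
  unfold eigMult
  letI : DecidableEq ((j : Fin n) × Fin (p j)) := Classical.decEq _
  set E := Module.End.eigenspace (Matrix.toLin' M) μ with hE
  -- local versions of the helper lemmas, phrased in terms of `H`
  have hadj_same : ∀ (j : Fin n) (b c : Fin (p j)), H.Adj ⟨j,b⟩ ⟨j,c⟩ ↔ b ≠ c := by
    rw [hH]; exact adj_same' G p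
  have hadj_ne : ∀ {j k : Fin n}, j ≠ k → ∀ (b : Fin (p j)) (c : Fin (p k)),
      (H.Adj ⟨j,b⟩ ⟨k,c⟩ ↔ G.Adj j k) := by
    rw [hH]; exact fun hjk b c => adj_ne' G p hjk b c
  have hdeg : ∀ (j : Fin n) (a : Fin (p j)) (inst : Fintype (H.neighborSet ⟨j,a⟩)),
      @SimpleGraph.degree _ H ⟨j,a⟩ inst = (p j - 1) + ∑ k ∈ G.neighborFinset j, p k := by
    rw [hH]; exact fun j a inst => deg_eq' G p j a inst
  set a0 : Fin (p i) := ⟨0, by omega⟩ with ha0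
  -- key eigenvector computation
  have key : ∀ b : Fin (p i), b ≠ a0 →
      M.mulVec (Pi.single (⟨i,b⟩ : (j : Fin n) × Fin (p j)) (1:ℝ) - Pi.single ⟨i,a0⟩ 1)
        = μ • (Pi.single (⟨i,b⟩ : (j : Fin n) × Fin (p j)) (1:ℝ) - Pi.single ⟨i,a0⟩ 1) := by
    intro b hb
    rw [Matrix.mulVec_sub, Matrix.mulVec_single, Matrix.mulVec_single]
    funext x
    obtain ⟨j, c⟩ := x
    simp only [Pi.sub_apply, Pi.smul_apply, smul_eq_mul, mul_one, Pi.single_apply,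
      MulOpposite.op_one, one_smul, Matrix.col_apply]
    rw [hM]
    unfold Aalpha
    simp only [Matrix.add_apply, Matrix.smul_apply, Matrix.diagonal_apply,
      SimpleGraph.adjMatrix_apply, smul_eq_mul]
    by_cases hji : j = i
    · subst hji
      have e1 : ((⟨j,c⟩ : (k : Fin n) × Fin (p k)) = ⟨j,b⟩) ↔ c = b := by simp
      have e2 : ((⟨j,c⟩ : (k : Fin n) × Fin (p k)) = ⟨j,a0⟩) ↔ c = a0 := by simp
      have e1' : ((⟨j,b⟩ : (k : Fin n) × Fin (p k)) = ⟨j,c⟩) ↔ b = c := by simp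
      have e2' : ((⟨j,a0⟩ : (k : Fin n) × Fin (p k)) = ⟨j,c⟩) ↔ a0 = c := by simp
      rw [hμ]
      by_cases hcb : c = b
      · have hca : ¬ c = a0 := by rw [hcb]; exact hb
        simp only [e1, e2, e1', e2', hadj_same, hdeg, if_pos hcb, if_neg hca,
          if_neg (not_not_intro hcb), if_pos (hca : c ≠ a0), ne_eq]
        push_cast [Nat.cast_sub (hp j)]
        ring
      · by_cases hca : c = a0
        · have hcb' : c ≠ b := hcb
          simp only [e1, e2, e1', e2', hadj_same, hdeg, if_neg hcb, if_pos hca,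
            if_pos hcb', if_neg (not_not_intro hca), ne_eq]
          push_cast [Nat.cast_sub (hp j)]
          ring
        · simp only [e1, e2, e1', e2', hadj_same, hdeg, if_neg hcb, if_neg hca,
            if_pos (hcb : c ≠ b), if_pos (hca : c ≠ a0), ne_eq]
          ring
    · have e1 : ¬ ((⟨j,c⟩ : (k : Fin n) × Fin (p k)) = ⟨i,b⟩) := by
        simp [hji]
      have e2 : ¬ ((⟨j,c⟩ : (k : Fin n) × Fin (p k)) = ⟨i,a0⟩) := by
        simp [hji]
      have h4 : H.Adj ⟨j,c⟩ ⟨i,b⟩ ↔ G.Adj j i := hadj_ne hji c b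
      have h4' : H.Adj ⟨j,c⟩ ⟨i,a0⟩ ↔ G.Adj j i := hadj_ne hji c a0
      by_cases hadj : G.Adj j i
      · simp only [if_neg e1, if_neg e2, if_pos (h4.2 hadj), if_pos (h4'.2 hadj)]
        ring
      · have n4 : ¬ H.Adj ⟨j,c⟩ ⟨i,b⟩ := fun h => hadj (h4.1 h)
        have n4' : ¬ H.Adj ⟨j,c⟩ ⟨i,a0⟩ := fun h => hadj (h4'.1 h)
        simp only [if_neg e1, if_neg e2, if_neg n4, if_neg n4']
        ring
  -- membership in the eigenspace
  have hmem : ∀ b : {b : Fin (p i) // b ≠ a0},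
      (Pi.single (⟨i,b.1⟩ : (j : Fin n) × Fin (p j)) (1:ℝ) - Pi.single (⟨i,a0⟩ : (j : Fin n) × Fin (p j)) (1:ℝ)) ∈ E := by
    intro b
    rw [hE, Module.End.mem_eigenspace_iff, Matrix.toLin'_apply]
    exact key b.1 b.2
  -- linear independence
  have hli : LinearIndependent ℝ (fun b : {b : Fin (p i) // b ≠ a0} =>
      ((Pi.single (⟨i,b.1⟩ : (j : Fin n) × Fin (p j)) (1:ℝ) - Pi.single (⟨i,a0⟩ : (j : Fin n) × Fin (p j)) (1:ℝ)) : ((j : Fin n) × Fin (p j)) → ℝ)) := by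
    rw [Fintype.linearIndependent_iff]
    intro g hg b
    have hx := congrFun hg ⟨i, b.1⟩
    simp only [Finset.sum_apply, Pi.smul_apply, Pi.sub_apply, smul_eq_mul,
      Pi.zero_apply] at hx
    have hzero : ∀ b' : {b : Fin (p i) // b ≠ a0},
        g b' * ((Pi.single (⟨i,b'.1⟩ : (j : Fin n) × Fin (p j)) (1:ℝ) : ((j : Fin n) × Fin (p j)) → ℝ) ⟨i,b.1⟩
          - (Pi.single (⟨i,a0⟩ : (j : Fin n) × Fin (p j)) (1:ℝ) : ((j : Fin n) × Fin (p j)) → ℝ) ⟨i,b.1⟩)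
        = if b' = b then g b' else 0 := by
      intro b'
      rw [Pi.single_apply, Pi.single_apply]
      have h1 : ¬ ((⟨i,b.1⟩ : (j : Fin n) × Fin (p j)) = ⟨i,a0⟩) := by
        simp [b.2]
      by_cases h : b' = b
      · have h2 : ((⟨i,b.1⟩ : (j : Fin n) × Fin (p j)) = ⟨i,b'.1⟩) := by rw [h]
        rw [if_pos h2, if_neg h1, if_pos h]
        ring
      · have h2 : ¬ ((⟨i,b.1⟩ : (j : Fin n) × Fin (p j)) = ⟨i,b'.1⟩) := by
          simp only [ne_eq, Sigma.mk.inj_iff, heq_eq_eq, true_and]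
          exact fun hh => h (Subtype.ext hh.symm)
        rw [if_neg h2, if_neg h1, if_neg h]
        ring
    rw [Finset.sum_congr rfl (fun b' _ => hzero b')] at hx
    rw [Finset.sum_ite_eq' Finset.univ b g] at hx
    simpa using hx
  have hli2 : LinearIndependent ℝ (fun b : {b : Fin (p i) // b ≠ a0} =>
      (⟨_, hmem b⟩ : E)) := by
    apply LinearIndependent.of_comp E.subtype
    exact hli
  have hcard : Fintype.card {b : Fin (p i) // b ≠ a0} = p i - 1 := by
    have h1 := Fintype.card_subtype_compl (fun b : Fin (p i) => b = a0)
    simp only [Fintype.card_subtype_eq, Fintype.card_fin] at h1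
    convert h1 using 2
  calc p i - 1 = Fintype.card {b : Fin (p i) // b ≠ a0} := hcard.symm
    _ ≤ Module.finrank ℝ E := hli2.fintype_card_le_finrank
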